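/- For the scalar closed loop x_{k+1} = -x_k + u_k, u_{k+1} = (1-η)u_k + η K x_k, the 2×2 system matrix [[-1, 1],[ηK, 1-η]] is not Schur stable (has an eigenvalue of modulus ≥ 1) for every pair (K, η) with 0 < K < 2 and 0 < η < 2. -/

import Mathlib

open Matrix Polynomial

/-- For every `0 < K < 2` and `0 < η < 2`, the closed-loop matrix
`[[-1, 1],[ηK, 1-η]]` is not Schur stable: it has an eigenvalue (a root of its
characteristic polynomial over `ℂ`) of modulus at least `1`. -/
theorem closed_loop_not_Schur_stable
    (K η : ℝ) (hK0 : 0 < K) (hK2 : K < 2) (hη0 : 0 < η) (hη2 : η < 2) :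
    ∃ z : ℂ, 1 ≤ ‖z‖ ∧
      (((!![-1, 1; η * K, 1 - η] : Matrix (Fin 2) (Fin 2) ℝ).map
          (Complex.ofReal)).charpoly).IsRoot z := by
  set D : ℝ := (2 - η)^2 + 4*η*K with hD
  have hDnn : 0 ≤ D := by positivity
  set s : ℝ := Real.sqrt D with hs
  have hs2 : s^2 = D := Real.sq_sqrt hDnn
  have hsge : 2 - η ≤ s := by
    have h1 : Real.sqrt ((2-η)^2) ≤ Real.sqrt D :=
      Real.sqrt_le_sqrt (by nlinarith)
    rwa [Real.sqrt_sq (by linarith)] at h1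
  set r : ℝ := (-η - s)/2 with hr
  have hrle : r ≤ -1 := by rw [hr]; linarith
  have key : r^2 + η*r + (η - 1 - η*K) = 0 := by
    rw [hr]; field_simp; nlinarith [hs2]
  refine ⟨(r : ℂ), ?_, ?_⟩
  · rw [Complex.norm_real, Real.norm_eq_abs]
    calc (1:ℝ) ≤ -r := by linarith
    _ ≤ |r| := neg_le_abs r
  · rw [Matrix.charpoly, Matrix.det_fin_two]
    simp only [Polynomial.IsRoot, Matrix.charmatrix_apply_eq,
      Matrix.charmatrix_apply_ne _ _ _ (by decide : (0:Fin 2) ≠ 1),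
      Matrix.charmatrix_apply_ne _ _ _ (by decide : (1:Fin 2) ≠ 0),
      Matrix.map_apply, Matrix.of_apply, Matrix.cons_val', Matrix.cons_val_zero,
      Matrix.cons_val_one, Matrix.head_cons, Matrix.empty_val',
      Matrix.cons_val_fin_one, Matrix.head_fin_const,
      Polynomial.eval_sub, Polynomial.eval_mul, Polynomial.eval_neg,
      Polynomial.eval_X, Polynomial.eval_C]
    have := congrArg (Complex.ofReal) key
    push_cast at this ⊢
    linear_combination this
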